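/- For k ≥ 1 and n ≥ k+3, the number of 132-avoiding permutations of length n with exactly n-2-k matches of MMP(k,0,1,0) equals 2k + binom(n-k, 2). -/

import Mathlib

open Finset

/-- σ avoids the classical pattern 132. -/
def avoids132 {n : ℕ} (σ : Equiv.Perm (Fin n)) : Prop :=
  ¬ ∃ i j k : Fin n, i < j ∧ j < k ∧ σ i < σ k ∧ σ k < σ j

/-- position `i` matches the quadrant marked mesh pattern MMP(a,b,c,d) in σ. -/
def mmpMatch {n : ℕ} (a b c d : ℕ) (σ : Equiv.Perm (Fin n)) (i : Fin n) : Prop :=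
  a ≤ (Finset.univ.filter fun j => i < j ∧ σ i < σ j).card ∧
  b ≤ (Finset.univ.filter fun j => j < i ∧ σ i < σ j).card ∧
  c ≤ (Finset.univ.filter fun j => j < i ∧ σ j < σ i).card ∧
  d ≤ (Finset.univ.filter fun j => i < j ∧ σ j < σ i).card

/-- the number of positions of σ matching MMP(a,b,c,d). -/
noncomputable def mmp {n : ℕ} (a b c d : ℕ) (σ : Equiv.Perm (Fin n)) : ℕ :=
  Nat.card {i : Fin n // mmpMatch a b c d σ i}

namespace Stmt10

instance {n : ℕ} (a b c d : ℕ) (σ : Equiv.Perm (Fin n)) (i : Fin n) :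
    Decidable (mmpMatch a b c d σ i) := by
  unfold mmpMatch; infer_instance

/-- transfer a `Fin n` filter-card to a `range n` filter-card -/
lemma card_filter_val {n : ℕ} (P : Fin n → Prop) [DecidablePred P] (Q : ℕ → Prop)
    [DecidablePred Q] (h : ∀ i : Fin n, P i ↔ Q i.val) :
    (Finset.univ.filter P).card = ((range n).filter Q).card := by
  refine Finset.card_bij' (fun i _ => i.val) (fun x hx => ⟨x, (mem_range.1 (mem_filter.1 hx).1)⟩)
    ?_ ?_ (fun i _ => rfl) (fun x _ => rfl)
  · intro i hi
    rw [mem_filter] at hi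
    rw [mem_filter, mem_range]
    exact ⟨i.isLt, (h i).1 hi.2⟩
  · intro x hx
    rw [mem_filter] at hx ⊢
    exact ⟨mem_univ _, (h _).2 hx.2⟩

lemma mmp_eq_card {n : ℕ} (a b c d : ℕ) (σ : Equiv.Perm (Fin n)) :
    mmp a b c d σ = (Finset.univ.filter fun i => mmpMatch a b c d σ i).card := by
  classical
  rw [mmp, Nat.card_eq_fintype_card, Fintype.card_subtype]

/-- the count of larger-after plus smaller-after is `n - 1 - i`. -/
lemma LA_add_SA {n : ℕ} (σ : Equiv.Perm (Fin n)) (i : Fin n) :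
    (Finset.univ.filter fun j => i < j ∧ σ i < σ j).card +
      (Finset.univ.filter fun j => i < j ∧ σ j < σ i).card = n - 1 - i.val := by
  classical
  rw [← Finset.card_union_of_disjoint]
  · rw [← Finset.filter_or]
    have h1 : (Finset.univ.filter fun j : Fin n => (i < j ∧ σ i < σ j) ∨ (i < j ∧ σ j < σ i))
        = Finset.univ.filter fun j => i < j := by
      apply Finset.filter_congr
      intro j _
      constructor
      · rintro (⟨h, _⟩ | ⟨h, _⟩) <;> exact h
      · intro hj
        rcases lt_or_gt_of_ne (fun he : σ i = σ j => (ne_of_lt hj) (σ.injective he)) with h | h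
        · exact Or.inl ⟨hj, h⟩
        · exact Or.inr ⟨hj, h⟩
    have h2 := card_filter_val (n := n) (fun j => i < j) (fun x => i.val < x)
      (fun j => Iff.rfl)
    rw [h1, h2, show (range n).filter (fun x => i.val < x) = Ico (i.val+1) n by
        ext x; simp only [mem_filter, mem_range, mem_Ico]; omega,
      Nat.card_Ico]
    omega
  · rw [Finset.disjoint_filter]
    rintro j _ ⟨_, h1⟩ ⟨_, h2⟩
    exact absurd (h1.trans h2) (lt_irrefl _)

lemma SB_pos_iff {n : ℕ} (σ : Equiv.Perm (Fin n)) (i : Fin n) :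
    1 ≤ (Finset.univ.filter fun j => j < i ∧ σ j < σ i).card ↔ ∃ j, j < i ∧ σ j < σ i := by
  classical
  rw [Nat.one_le_iff_ne_zero, ne_eq, Finset.card_eq_zero, ← ne_eq,
    ← Finset.nonempty_iff_ne_empty]
  constructor
  · rintro ⟨j, hj⟩; simp only [mem_filter, mem_univ, true_and] at hj; exact ⟨j, hj⟩
  · rintro ⟨j, hj⟩; exact ⟨j, by simp only [mem_filter, mem_univ, true_and]; exact hj⟩

def rhoFun (m d i : ℕ) : ℕ := if i < d then i + m else if i < d + m then i - d else i
def rhoInv (m d v : ℕ) : ℕ := if v < m then v + d else if v < m + d then v - m else v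

def rho (n m d : ℕ) (h : m + d ≤ n) : Equiv.Perm (Fin n) where
  toFun i := ⟨rhoFun m d i.val, by have := i.isLt; unfold rhoFun; split_ifs <;> omega⟩
  invFun v := ⟨rhoInv m d v.val, by have := v.isLt; unfold rhoInv; split_ifs <;> omega⟩
  left_inv i := by
    apply Fin.ext
    have := i.isLt
    simp only [rhoFun, rhoInv]
    split_ifs <;> omega
  right_inv v := by
    apply Fin.ext
    have := v.isLt
    simp only [rhoFun, rhoInv]
    split_ifs <;> omega

lemma rho_val {n m d : ℕ} (h : m + d ≤ n) (i : Fin n) :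
    ((rho n m d h) i).val = rhoFun m d i.val := rfl

lemma rho_avoids {n m d : ℕ} (h : m + d ≤ n) : avoids132 (rho n m d h) := by
  rintro ⟨i, j, l, hij, hjl, h1, h2⟩
  rw [Fin.lt_def] at hij hjl h1 h2
  rw [rho_val, rho_val] at h1 h2
  have hi := i.isLt; have hj := j.isLt; have hl := l.isLt
  simp only [rhoFun] at h1 h2
  split_ifs at h1 h2 <;> omega

lemma rho_SA {n m d : ℕ} (h : m + d ≤ n) (i : Fin n) :
    (Finset.univ.filter fun j => i < j ∧ (rho n m d h) j < (rho n m d h) i).card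
      = if i.val < d then m else 0 := by
  rw [card_filter_val (fun j => i < j ∧ (rho n m d h) j < (rho n m d h) i)
    (fun x => i.val < x ∧ rhoFun m d x < rhoFun m d i.val) (fun j => Iff.rfl)]
  by_cases hc : i.val < d
  · rw [if_pos hc, show ((range n).filter fun x => i.val < x ∧ rhoFun m d x < rhoFun m d i.val)
        = Ico d (d + m) from ?_, Nat.card_Ico]
    · omega
    · ext x
      rw [mem_filter]
      simp only [mem_filter, mem_range, mem_Ico, rhoFun]
      split_ifs <;> omega
  · rw [if_neg hc, Finset.card_eq_zero, Finset.filter_eq_empty_iff]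
    intro x hx
    rw [mem_range] at hx
    simp only [rhoFun]
    split_ifs <;> omega

lemma rho_SB {n m d : ℕ} (hm : 1 ≤ m) (hd : 1 ≤ d) (h : m + d ≤ n) (i : Fin n) :
    (1 ≤ (Finset.univ.filter fun j => j < i ∧ (rho n m d h) j < (rho n m d h) i).card)
      ↔ (i.val ≠ 0 ∧ i.val ≠ d) := by
  rw [SB_pos_iff]
  constructor
  · rintro ⟨j, hj1, hj2⟩
    rw [Fin.lt_def] at hj1 hj2
    rw [rho_val, rho_val] at hj2
    have hj := j.isLt
    simp only [rhoFun] at hj2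
    constructor
    · omega
    · intro hid
      rw [hid] at hj2
      split_ifs at hj2 <;> omega
  · rintro ⟨h0, hd'⟩
    have hi := i.isLt
    by_cases hc : i.val < d
    · refine ⟨⟨0, by omega⟩, by rw [Fin.lt_def]; exact Nat.pos_of_ne_zero h0, ?_⟩
      rw [Fin.lt_def, rho_val, rho_val]
      simp only [rhoFun]
      split_ifs <;> omega
    · refine ⟨⟨d, by omega⟩, by rw [Fin.lt_def]; simpa using by omega, ?_⟩
      rw [Fin.lt_def, rho_val, rho_val]
      simp only [rhoFun]
      split_ifs <;> omega

lemma rho_match_iff {n m d k : ℕ} (hm : 1 ≤ m) (hd : 1 ≤ d) (h : m + d ≤ n) (i : Fin n) :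
    mmpMatch k 0 1 0 (rho n m d h) i ↔
      (i.val ≠ 0 ∧ i.val ≠ d ∧ i.val + k + (if i.val < d then m else 0) < n) := by
  have hSA := rho_SA h i
  have hsum := LA_add_SA (rho n m d h) i
  have hSB := rho_SB hm hd h i
  rw [hSA] at hsum
  have hi := i.isLt
  constructor
  · rintro ⟨h1, -, h3, -⟩
    obtain ⟨hne0, hned⟩ := hSB.1 h3
    refine ⟨hne0, hned, ?_⟩
    by_cases hc : i.val < d
    · rw [if_pos hc] at hsum ⊢; omega
    · rw [if_neg hc] at hsum ⊢; omega
  · rintro ⟨h0, hd', harith⟩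
    refine ⟨?_, Nat.zero_le _, hSB.2 ⟨h0, hd'⟩, Nat.zero_le _⟩
    by_cases hc : i.val < d
    · rw [if_pos hc] at hsum harith; omega
    · rw [if_neg hc] at hsum harith; omega

lemma rho_mmp {n m d k : ℕ} (hm : 1 ≤ m) (hd : 1 ≤ d) (h : m + d ≤ n) :
    mmp k 0 1 0 (rho n m d h) = (min d (n - k - m) - 1) + (n - k - (d + 1)) := by
  rw [mmp_eq_card]
  rw [card_filter_val (fun i => mmpMatch k 0 1 0 (rho n m d h) i)
    (fun x => x ≠ 0 ∧ x ≠ d ∧ x + k + (if x < d then m else 0) < n)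
    (fun i => rho_match_iff hm hd h i)]
  rw [show ((range n).filter fun x => x ≠ 0 ∧ x ≠ d ∧ x + k + (if x < d then m else 0) < n)
      = Ico 1 (min d (n - k - m)) ∪ Ico (d + 1) (n - k) from ?_]
  · rw [Finset.card_union_of_disjoint, Nat.card_Ico, Nat.card_Ico]
    rw [Finset.disjoint_left]
    intro a ha hb
    rw [mem_Ico] at ha hb
    omega
  · ext x
    simp only [mem_filter, mem_range, mem_union, mem_Ico]
    split_ifs <;> omega

lemma rho_zero_val {n m d : ℕ} (hd : 1 ≤ d) (h : m + d ≤ n) (hn : 0 < n) :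
    ((rho n m d h) ⟨0, hn⟩).val = m := by
  rw [rho_val]; simp only [rhoFun]; split_ifs <;> omega

lemma rho_symm_zero_val {n m d : ℕ} (hm : 1 ≤ m) (h : m + d ≤ n) (hn : 0 < n) :
    ((rho n m d h).symm ⟨0, hn⟩).val = d := by
  have : ((rho n m d h).symm ⟨0, hn⟩) = ⟨rhoInv m d 0, by unfold rhoInv; split_ifs <;> omega⟩ := rfl
  rw [this]
  simp only [rhoInv]
  split_ifs <;> omega

lemma match_iff {n k : ℕ} (σ : Equiv.Perm (Fin n)) (i : Fin n) :
    mmpMatch k 0 1 0 σ i ↔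
      (k ≤ (Finset.univ.filter fun j => i < j ∧ σ i < σ j).card ∧ ∃ j, j < i ∧ σ j < σ i) := by
  unfold mmpMatch
  constructor
  · rintro ⟨h1, -, h3, -⟩
    exact ⟨h1, (SB_pos_iff σ i).1 h3⟩
  · rintro ⟨h1, h2⟩
    exact ⟨h1, Nat.zero_le _, (SB_pos_iff σ i).2 h2, Nat.zero_le _⟩

lemma converse {n k : ℕ} (hk : 1 ≤ k) (hn : k + 3 ≤ n) (σ : Equiv.Perm (Fin n))
    (hav : avoids132 σ) (hcnt : mmp k 0 1 0 σ = n - 2 - k) :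
    ∃ (m d : ℕ) (hmd : m + d ≤ n), 1 ≤ m ∧ 1 ≤ d ∧ σ = rho n m d hmd := by
  have hn0 : 0 < n := by omega
  set z : Fin n := ⟨0, hn0⟩ with hzdef
  -- avoidance in usable form
  have hAv : ∀ t j l : Fin n, j < l → σ l < σ j → t < j → σ l < σ t := by
    intro t j l hjl hlj htj
    by_contra hc
    push_neg at hc
    have hne : σ t ≠ σ l := fun he => (ne_of_lt (htj.trans hjl)) (σ.injective he)
    exact hav ⟨t, j, l, htj, hjl, lt_of_le_of_ne hc hne, hlj⟩
  -- non-match count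
  have hnm : (Finset.univ.filter fun i => ¬ mmpMatch k 0 1 0 σ i).card = k + 2 := by
    have h1 := Finset.card_filter_add_card_filter_not
      (s := Finset.univ) (p := fun i => mmpMatch k 0 1 0 σ i)
    rw [mmp_eq_card] at hcnt
    have h2 : (Finset.univ : Finset (Fin n)).card = n := by
      rw [Finset.card_univ, Fintype.card_fin]
    omega
  -- base nonmatch set B
  set B : Finset (Fin n) := insert z (Finset.univ.filter fun i : Fin n => n - k ≤ i.val)
    with hBdef
  have hzB : z ∉ (Finset.univ.filter fun i : Fin n => n - k ≤ i.val) := by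
    rw [mem_filter]
    rintro ⟨-, h⟩
    simp only [hzdef] at h
    omega
  have hBcard : B.card = k + 1 := by
    rw [hBdef, Finset.card_insert_of_notMem hzB,
      card_filter_val (fun i : Fin n => n - k ≤ i.val) (fun x => n - k ≤ x) (fun i => Iff.rfl),
      show ((range n).filter fun x => n - k ≤ x) = Ico (n - k) n from by
        ext x; simp only [mem_filter, mem_range, mem_Ico]; omega,
      Nat.card_Ico]
    omega
  have hBnm : ∀ i ∈ B, ¬ mmpMatch k 0 1 0 σ i := by
    intro i hi
    rw [hBdef, mem_insert, mem_filter] at hi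
    intro hmm
    obtain ⟨hLA, ⟨j, hj1, hj2⟩⟩ := (match_iff σ i).1 hmm
    rcases hi with he | ⟨-, hge⟩
    · rw [he] at hj1
      exact absurd hj1 (by rw [Fin.lt_def]; simp [hzdef])
    · have := LA_add_SA σ i
      omega
  have hBsub : B ⊆ Finset.univ.filter fun i => ¬ mmpMatch k 0 1 0 σ i := by
    intro i hi
    rw [mem_filter]
    exact ⟨mem_univ _, hBnm i hi⟩
  obtain ⟨p, hp⟩ : ∃ p, (Finset.univ.filter fun i => ¬ mmpMatch k 0 1 0 σ i) \ B = {p} := by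
    rw [← Finset.card_eq_one, Finset.card_sdiff_of_subset hBsub, hnm, hBcard]
    omega
  have hKey : ∀ i : Fin n, ¬ mmpMatch k 0 1 0 σ i → 1 ≤ i.val → i.val < n - k → i = p := by
    intro i h1 h2 h3
    have hiB : i ∉ B := by
      rw [hBdef, mem_insert, mem_filter]
      push_neg
      refine ⟨fun he => by rw [he] at h2; simp [hzdef] at h2, fun _ => by omega⟩
    have : i ∈ (Finset.univ.filter fun i => ¬ mmpMatch k 0 1 0 σ i) \ B :=
      Finset.mem_sdiff.2 ⟨mem_filter.2 ⟨mem_univ _, h1⟩, hiB⟩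
    rw [hp] at this
    exact Finset.mem_singleton.1 this
  have hMid : ∀ i : Fin n, 1 ≤ i.val → i.val < n - k → i ≠ p → mmpMatch k 0 1 0 σ i := by
    intro i h1 h2 h3
    by_contra hc
    exact h3 (hKey i hc h1 h2)
  -- d := position of value 0
  set d : Fin n := σ.symm z with hddef
  have hσd : σ d = z := σ.apply_symm_apply z
  have hvz : ∀ i : Fin n, σ i = z → i = d := by
    intro i hi
    rw [hddef, ← hi, Equiv.symm_apply_apply]
  have hvzne : ∀ i : Fin n, i ≠ d → 1 ≤ (σ i).val := by
    intro i hi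
    rcases Nat.eq_zero_or_pos (σ i).val with h | h
    · exact absurd (hvz i (Fin.ext h)) hi
    · exact h
  -- d ≠ z
  have hdz : d ≠ z := by
    intro he
    have hσz : σ z = z := he ▸ hσd
    have hall : ∀ i : Fin n, 1 ≤ i.val → i.val < n - k → mmpMatch k 0 1 0 σ i := by
      intro i h1 h2
      have hiz : i ≠ z := fun he2 => by rw [he2] at h1; simp [hzdef] at h1
      rw [match_iff]
      constructor
      · have hSA0 : (Finset.univ.filter fun j => i < j ∧ σ j < σ i).card = 0 := by
          rw [Finset.card_eq_zero, Finset.filter_eq_empty_iff]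
          rintro j - ⟨hij, hji⟩
          have h0i : z < i := by rw [Fin.lt_def]; simpa [hzdef] using Nat.lt_of_lt_of_le Nat.zero_lt_one (h1)
          have := hAv z i j hij hji h0i
          rw [hσz, Fin.lt_def] at this
          simp [hzdef] at this
        have := LA_add_SA σ i
        omega
      · refine ⟨z, by rw [Fin.lt_def]; simpa [hzdef] using Nat.lt_of_lt_of_le Nat.zero_lt_one (h1), ?_⟩
        rw [hσz, Fin.lt_def]
        have : i ≠ d := by rw [← he] at hiz; exact hiz
        simpa [hzdef] using Nat.lt_of_lt_of_le Nat.zero_lt_one (hvzne i this)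
    have hsub : (Finset.univ.filter fun i => ¬ mmpMatch k 0 1 0 σ i) ⊆ B := by
      intro i hi
      rw [mem_filter] at hi
      by_contra hiB
      rw [hBdef, mem_insert, mem_filter] at hiB
      push_neg at hiB
      obtain ⟨h1, h2⟩ := hiB
      have h1' : 1 ≤ i.val := by
        rcases Nat.eq_zero_or_pos i.val with h | h
        · exact absurd (Fin.ext h : i = z) h1
        · exact h
      exact hi.2 (hall i h1' (by have := h2 (mem_univ _); omega))
    have := Finset.card_le_card hsub
    omega
  have hm1 : 1 ≤ (σ z).val := hvzne z (Ne.symm hdz)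
  have hd1 : 1 ≤ d.val := by
    rcases Nat.eq_zero_or_pos d.val with h | h
    · exact absurd (Fin.ext h : d = z) hdz
    · exact h
  -- left-to-right minima are nonmatches
  have hnmMin : ∀ t : Fin n, (∀ j, j < t → σ t < σ j) → ¬ mmpMatch k 0 1 0 σ t := by
    intro t ht hmm
    obtain ⟨-, ⟨j, hj1, hj2⟩⟩ := (match_iff σ t).1 hmm
    exact absurd hj2 (not_lt.2 (le_of_lt (ht j hj1)))
  have hd_min : ∀ j, j < d → σ d < σ j := by
    intro j hj
    rw [hσd, Fin.lt_def]
    simpa [hzdef] using Nat.lt_of_lt_of_le Nat.zero_lt_one (hvzne j (ne_of_lt hj))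
  have hd_nm : ¬ mmpMatch k 0 1 0 σ d := hnmMin d hd_min
  -- the only LtR minima are z and d
  have hOnly : ∀ t : Fin n, (∀ j, j < t → σ t < σ j) → t = z ∨ t = d := by
    intro t ht
    by_contra hc
    push_neg at hc
    obtain ⟨htz, htd⟩ := hc
    have ht1 : 1 ≤ t.val := by
      rcases Nat.eq_zero_or_pos t.val with h | h
      · exact absurd (Fin.ext h : t = z) htz
      · exact h
    have htln : t < d := by
      rcases lt_trichotomy t d with h | h | h
      · exact h
      · exact absurd h htd
      · exfalso
        have := ht d h
        rw [hσd, Fin.lt_def] at this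
        simp [hzdef] at this
    have ht_nm : ¬ mmpMatch k 0 1 0 σ t := hnmMin t ht
    have hdge : n - k ≤ d.val := by
      by_contra hlt
      push_neg at hlt
      have hdp := hKey d hd_nm hd1 hlt
      have htp := hKey t ht_nm ht1 (by rw [Fin.lt_def] at htln; omega)
      exact htd (htp.trans hdp.symm)
    set i0 : Fin n := ⟨n - k - 1, by omega⟩ with hi0def
    have hi0nm : ¬ mmpMatch k 0 1 0 σ i0 := by
      intro hmm
      obtain ⟨hLA, -⟩ := (match_iff σ i0).1 hmm
      have hi0d : i0 ≠ d := by
        intro he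
        rw [← he] at hdge
        simp only [hi0def] at hdge
        omega
      have hd_in : d ∈ Finset.univ.filter fun j => i0 < j ∧ σ j < σ i0 := by
        rw [mem_filter]
        refine ⟨mem_univ _, by rw [Fin.lt_def]; simp only [hi0def]; omega, ?_⟩
        rw [hσd, Fin.lt_def]
        simpa [hzdef] using Nat.lt_of_lt_of_le Nat.zero_lt_one (hvzne i0 hi0d)
      have hSA1 : 1 ≤ (Finset.univ.filter fun j => i0 < j ∧ σ j < σ i0).card :=
        Finset.card_pos.2 ⟨d, hd_in⟩
      have hsum := LA_add_SA σ i0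
      have hi0v : i0.val = n - k - 1 := rfl
      omega
    have hp0 := hKey i0 hi0nm (by simp only [hi0def]; omega) (by simp only [hi0def]; omega)
    have htge : n - k - 1 ≤ t.val := by
      by_contra h'
      push_neg at h'
      have := (hKey t ht_nm ht1 (by omega)).trans hp0.symm
      rw [this] at h'
      simp only [hi0def] at h'
      omega
    set i1 : Fin n := ⟨n - k - 2, by omega⟩ with hi1def
    have hi1m : mmpMatch k 0 1 0 σ i1 := by
      apply hMid i1 (by simp only [hi1def]; omega) (by simp only [hi1def]; omega)
      intro he
      have := he.trans hp0.symm
      have : i1.val = i0.val := by rw [this]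
      simp only [hi1def, hi0def] at this
      omega
    obtain ⟨hLA, -⟩ := (match_iff σ i1).1 hi1m
    have htd' : t ≠ d := htd
    have htmem : t ∈ Finset.univ.filter fun j => i1 < j ∧ σ j < σ i1 := by
      rw [mem_filter]
      refine ⟨mem_univ _, by rw [Fin.lt_def]; simp only [hi1def]; omega, ?_⟩
      apply ht
      rw [Fin.lt_def]
      simp only [hi1def]
      omega
    have hdmem : d ∈ Finset.univ.filter fun j => i1 < j ∧ σ j < σ i1 := by
      rw [mem_filter]
      have hi1d : i1 ≠ d := by
        intro he
        have : i1.val = d.val := by rw [he]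
        simp only [hi1def] at this
        omega
      refine ⟨mem_univ _, by rw [Fin.lt_def]; simp only [hi1def]; omega, ?_⟩
      rw [hσd, Fin.lt_def]
      simpa [hzdef] using Nat.lt_of_lt_of_le Nat.zero_lt_one (hvzne i1 hi1d)
    have h2le : 2 ≤ (Finset.univ.filter fun j => i1 < j ∧ σ j < σ i1).card := by
      have hsub2 : ({t, d} : Finset (Fin n)) ⊆
          Finset.univ.filter fun j => i1 < j ∧ σ j < σ i1 := by
        intro x hx
        rcases Finset.mem_insert.1 hx with he | he
        · rw [he]; exact htmem
        · rw [Finset.mem_singleton.1 he]; exact hdmem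
      calc 2 = ({t, d} : Finset (Fin n)).card := (Finset.card_pair htd').symm
        _ ≤ _ := Finset.card_le_card hsub2
    have hsum := LA_add_SA σ i1
    have hi1v : i1.val = n - k - 2 := rfl
    omega
  -- prefix minimum bound
  have hlow : ∀ i : Fin n, i.val ≤ d.val → ∀ j : Fin n, j < i → (σ z).val ≤ (σ j).val := by
    intro i hi j hj
    have hzi : z ∈ Finset.univ.filter fun x : Fin n => x < i := by
      rw [mem_filter]
      refine ⟨mem_univ _, ?_⟩
      rw [Fin.lt_def]
      have := hj
      rw [Fin.lt_def] at this
      simp only [hzdef]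
      omega
    obtain ⟨j0, hj0mem, hj0min⟩ := Finset.exists_min_image
      (Finset.univ.filter fun x : Fin n => x < i) σ ⟨z, hzi⟩
    have hj0lt : j0 < i := (mem_filter.1 hj0mem).2
    have hj0m : ∀ x, x < j0 → σ j0 < σ x := by
      intro x hx
      have hxmem : x ∈ Finset.univ.filter fun y : Fin n => y < i :=
        mem_filter.2 ⟨mem_univ _, hx.trans hj0lt⟩
      exact lt_of_le_of_ne (hj0min x hxmem)
        (fun he => (ne_of_lt hx) (σ.injective he.symm))
    rcases hOnly j0 hj0m with he | he
    · have := hj0min j (mem_filter.2 ⟨mem_univ _, hj⟩)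
      rw [he] at this
      exact this
    · exfalso
      rw [he, Fin.lt_def] at hj0lt
      omega
  -- suffix is increasing
  have hsuf : ∀ i l : Fin n, d ≤ i → i < l → σ i < σ l := by
    intro i l hdi hil
    rcases eq_or_lt_of_le hdi with he | hlt
    · rw [← he, hσd, Fin.lt_def]
      simpa [hzdef] using Nat.lt_of_lt_of_le Nat.zero_lt_one (hvzne l (fun hld => (ne_of_lt hil).symm (hld.trans he)))
    · by_contra hc
      push_neg at hc
      have hinv : σ l < σ i := lt_of_le_of_ne hc (fun he2 => (ne_of_lt hil) (σ.injective he2.symm))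
      have := hAv d i l hil hinv hlt
      rw [hσd, Fin.lt_def] at this
      simp [hzdef] at this
  -- prefix is m, m+1, ..., m+d-1
  have hpre : ∀ a : ℕ, ∀ i : Fin n, i.val = a → i < d → (σ i).val = (σ z).val + a := by
    intro a
    induction a using Nat.strong_induction_on with
    | _ a IH =>
      intro i hia hid
      match a, hia with
      | 0, hia =>
        have : i = z := Fin.ext (by simp [hzdef, hia])
        rw [this]
        omega
      | b + 1, hia =>
        have hbn : b < n := by have := i.isLt; omega
        set ip : Fin n := ⟨b, hbn⟩ with hipdef
        have hipi : ip < i := by rw [Fin.lt_def]; simp only [hipdef]; omega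
        have hipd : ip < d := by
          rw [Fin.lt_def] at hid ⊢
          simp only [hipdef]
          omega
        have hIH := IH b (by omega) ip rfl hipd
        have hlt1 : (σ ip).val < (σ i).val := by
          rw [← Fin.lt_def]
          by_contra hc
          push_neg at hc
          have hinv : σ i < σ ip := lt_of_le_of_ne hc
            (fun he2 => (ne_of_lt hipi) (σ.injective he2.symm))
          have hiz : σ i < σ z := by
            rcases Nat.eq_zero_or_pos b with hb | hb
            · have : ip = z := Fin.ext (by simp [hzdef, hipdef, hb])
              rw [← this]
              exact hinv
            · exact hAv z ip i hipi hinv (by rw [Fin.lt_def]; simp only [hzdef, hipdef]; omega)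
          have := hlow d (le_refl _) i hid
          rw [Fin.lt_def] at hiz
          omega
        have hub : (σ i).val ≤ (σ z).val + b + 1 := by
          by_contra hc
          push_neg at hc
          set v : Fin n := ⟨(σ z).val + b + 1, by have := (σ i).isLt; omega⟩ with hvdef
          set l : Fin n := σ.symm v with hldef
          have hσl : σ l = v := σ.apply_symm_apply v
          have hil : i < l := by
            rcases lt_trichotomy l i with h | h | h
            · exfalso
              have hlb : l.val ≤ b := by
                rw [Fin.lt_def] at h
                omega
              have hld : l < d := by
                rw [Fin.lt_def] at hipd ⊢
                simp only [hipdef] at hipd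
                omega
              have := IH l.val (by omega) l rfl hld
              rw [hσl] at this
              simp only [hvdef] at this
              omega
            · exfalso
              rw [h] at hσl
              have : (σ i).val = (σ z).val + b + 1 := by rw [hσl]
              omega
            · exact h
          have := hAv ip i l hil (by rw [hσl, Fin.lt_def]; simp only [hvdef]; omega) hipi
          rw [hσl, Fin.lt_def] at this
          simp only [hvdef] at this
          omega
        omega
  -- m + d ≤ n
  have hd_mlt : (σ z).val + d.val ≤ n := by
    set dp : Fin n := ⟨d.val - 1, by have := d.isLt; omega⟩ with hdpdef
    have := hpre (d.val - 1) dp rfl (by rw [Fin.lt_def]; simp only [hdpdef]; omega)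
    have := (σ dp).isLt
    omega
  -- second block
  have hsec : ∀ a : ℕ, a < (σ z).val → ∀ i : Fin n, i.val = d.val + a → (σ i).val = a := by
    intro a
    induction a with
    | zero =>
      intro ha i hi
      have : i = d := Fin.ext (by omega)
      rw [this, hσd]
    | succ b IHb =>
      intro hb i hi
      have hin := i.isLt
      set vb : Fin n := ⟨b + 1, by omega⟩ with hvbdef
      set l : Fin n := σ.symm vb with hldef
      have hσl : σ l = vb := σ.apply_symm_apply vb
      have hld : d.val ≤ l.val := by
        by_contra hc
        push_neg at hc
        have := hlow d (le_refl _) l (by rw [Fin.lt_def]; omega)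
        rw [hσl] at this
        simp only [hvbdef] at this
        omega
      set ib : Fin n := ⟨d.val + b, by omega⟩ with hibdef
      have hIH : (σ ib).val = b := IHb (by omega) ib rfl
      have hlgt : d.val + b < l.val := by
        rcases lt_trichotomy l.val (d.val + b) with h | h | h
        · exfalso
          have := hsuf l ib (by rw [Fin.le_def]; omega)
            (by rw [Fin.lt_def]; simp only [hibdef]; omega)
          rw [hσl, Fin.lt_def] at this
          simp only [hvbdef] at this
          rw [hIH] at this
          omega
        · exfalso
          have hle : l = ib := Fin.ext (by simp only [hibdef]; omega)
          rw [hle] at hσl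
          have : (σ ib).val = b + 1 := by rw [hσl]
          rw [hIH] at this
          omega
        · exact h
      rcases eq_or_lt_of_le (show i.val ≤ l.val by omega) with he | hlt
      · have : i = l := Fin.ext he
        rw [this, hσl]
      · have h1 := hsuf i l (by rw [Fin.le_def]; omega) (by rw [Fin.lt_def]; omega)
        have h2 := hsuf ib i (by rw [Fin.le_def]; simp only [hibdef]; omega)
          (by rw [Fin.lt_def]; simp only [hibdef]; omega)
        rw [hσl] at h1
        rw [Fin.lt_def] at h1 h2
        simp only [hvbdef] at h1
        rw [hIH] at h2
        omega
  -- third block: identity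
  have hge : ∀ i : Fin n, d.val + (σ z).val ≤ i.val → d.val + (σ z).val ≤ (σ i).val := by
    intro i hi
    by_contra hc
    push_neg at hc
    by_cases hv : (σ i).val < (σ z).val
    · have h1 := hsec (σ i).val hv ⟨d.val + (σ i).val, by omega⟩ rfl
      have h2 : (⟨d.val + (σ i).val, by omega⟩ : Fin n) = i := by
        apply σ.injective
        exact Fin.ext h1
      have h3 : d.val + (σ i).val = i.val := congrArg Fin.val h2
      omega
    · push_neg at hv
      set w : Fin n := ⟨(σ i).val - (σ z).val, by have := (σ i).isLt; omega⟩ with hwdef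
      have hwd : w < d := by rw [Fin.lt_def]; simp only [hwdef]; omega
      have h1 := hpre w.val w rfl hwd
      have h2 : w = i := by
        apply σ.injective
        apply Fin.ext
        rw [h1]
        simp only [hwdef]
        omega
      have : w.val = i.val := by rw [h2]
      simp only [hwdef] at this
      omega
  have hup : ∀ a : ℕ, ∀ i : Fin n, i.val = d.val + (σ z).val + a → i.val ≤ (σ i).val := by
    intro a
    induction a with
    | zero =>
      intro i hi
      have := hge i (by omega)
      omega
    | succ b IH =>
      intro i hi
      set ip : Fin n := ⟨d.val + (σ z).val + b, by have := i.isLt; omega⟩ with hipdef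
      have hipv : ip.val = d.val + (σ z).val + b := rfl
      have h1 := IH ip rfl
      have h2 := hsuf ip i (by rw [Fin.le_def]; omega)
        (by rw [Fin.lt_def]; omega)
      rw [Fin.lt_def] at h2
      omega
  have hdn : ∀ a : ℕ, ∀ i : Fin n, i.val = n - 1 - a → d.val ≤ i.val → (σ i).val ≤ i.val := by
    intro a
    induction a with
    | zero =>
      intro i hi _
      have := (σ i).isLt
      omega
    | succ b IH =>
      intro i hi hdi
      rcases eq_or_lt_of_le (show i.val ≤ n - 1 by have := i.isLt; omega) with he | hlt
      · have := (σ i).isLt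
        omega
      · set inext : Fin n := ⟨i.val + 1, by omega⟩ with hinextdef
        have hinextv : inext.val = i.val + 1 := rfl
        have h1 := IH inext (by omega) (by omega)
        have h2 := hsuf i inext (by rw [Fin.le_def]; omega)
          (by rw [Fin.lt_def]; omega)
        rw [Fin.lt_def] at h2
        omega
  have hthird : ∀ i : Fin n, d.val + (σ z).val ≤ i.val → (σ i).val = i.val := by
    intro i hi
    have h1 := hup (i.val - d.val - (σ z).val) i (by omega)
    have h2 := hdn (n - 1 - i.val) i (by have := i.isLt; omega) (by omega)
    omega
  -- assemble
  refine ⟨(σ z).val, d.val, by omega, hm1, hd1, ?_⟩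
  apply Equiv.ext
  intro i
  apply Fin.ext
  rw [rho_val]
  unfold rhoFun
  split_ifs with h1 h2
  · have := hpre i.val i rfl (by rw [Fin.lt_def]; exact h1)
    omega
  · have h3 := hsec (i.val - d.val) (by omega) i (by omega)
    omega
  · exact hthird i (by omega)

lemma sum_range_choose (M : ℕ) : ∑ j ∈ range M, j = M.choose 2 := by
  induction M with
  | zero => rfl
  | succ L IH =>
    have hcs : (L + 1).choose 2 = L.choose 1 + L.choose 2 := Nat.choose_succ_succ L 1
    rw [Finset.sum_range_succ, IH, hcs, Nat.choose_one_right]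
    omega

lemma card_tri (M : ℕ) :
    (((Ico 1 (M + 1)) ×ˢ (Ico 1 (M + 1))).filter fun p : ℕ × ℕ => p.1 + p.2 ≤ M + 1).card
      = (M + 1).choose 2 := by
  rw [Finset.card_eq_sum_card_fiberwise (f := fun p : ℕ × ℕ => p.2) (t := Ico 1 (M + 1))
    (fun p hp => (mem_product.1 (mem_filter.1 hp).1).2)]
  have hfib : ∀ d ∈ Ico 1 (M + 1),
      ((((Ico 1 (M + 1)) ×ˢ (Ico 1 (M + 1))).filter fun p : ℕ × ℕ => p.1 + p.2 ≤ M + 1).filter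
        fun p => p.2 = d).card = M + 1 - d := by
    intro d hd
    rw [mem_Ico] at hd
    rw [show ((((Ico 1 (M + 1)) ×ˢ (Ico 1 (M + 1))).filter
          fun p : ℕ × ℕ => p.1 + p.2 ≤ M + 1).filter fun p => p.2 = d)
        = (Ico 1 (M + 2 - d)) ×ˢ ({d} : Finset ℕ) from by
      ext ⟨a, b⟩
      simp only [mem_filter, mem_product, mem_Ico, mem_singleton]
      omega]
    rw [Finset.card_product, Nat.card_Ico, Finset.card_singleton]
    omega
  rw [Finset.sum_congr rfl hfib, Finset.sum_Ico_eq_sum_range]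
  have hr : range (M + 1 - 1) = range M := by norm_num
  have h1 : ∀ i ∈ range M, M + 1 - (1 + i) = M - 1 - i + 1 := by
    intro i hi
    rw [mem_range] at hi
    omega
  have hcs : (M + 1).choose 2 = M.choose 1 + M.choose 2 := Nat.choose_succ_succ M 1
  rw [Finset.sum_congr hr h1, Finset.sum_range_reflect (fun j => j + 1) M,
    Finset.sum_add_distrib, Finset.sum_const, sum_range_choose, Finset.card_range,
    hcs, Nat.choose_one_right, smul_eq_mul]
  omega

def Pfin (n k : ℕ) : Finset (ℕ × ℕ) :=
  (((Ico 1 (n - k)) ×ˢ (Ico 1 (n - k))).filter fun p : ℕ × ℕ => p.1 + p.2 ≤ n - k)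
    ∪ ((Ico (n - k) n) ×ˢ ({1} : Finset ℕ)) ∪ (({1} : Finset ℕ) ×ˢ (Ico (n - k) n))

lemma mem_Pfin {n k : ℕ} (hk : 1 ≤ k) (hn : k + 3 ≤ n) (p : ℕ × ℕ) :
    p ∈ Pfin n k ↔
      (1 ≤ p.1 ∧ 1 ≤ p.2 ∧ p.1 + p.2 ≤ n ∧ (p.1 + p.2 ≤ n - k ∨ p.1 = 1 ∨ p.2 = 1)) := by
  obtain ⟨m, d⟩ := p
  simp only [Pfin, mem_union, mem_filter, mem_product, mem_Ico, mem_singleton]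
  omega

lemma card_Pfin {n k : ℕ} (hk : 1 ≤ k) (hn : k + 3 ≤ n) :
    (Pfin n k).card = 2 * k + (n - k).choose 2 := by
  obtain ⟨M, hM⟩ : ∃ M, n - k = M + 1 := ⟨n - k - 1, by omega⟩
  rw [Pfin, Finset.card_union_of_disjoint, Finset.card_union_of_disjoint]
  · rw [hM, card_tri M, Finset.card_product, Finset.card_product,
      Nat.card_Ico, Finset.card_singleton]
    omega
  · rw [Finset.disjoint_left]
    rintro ⟨a, b⟩ ha hb
    simp only [mem_filter, mem_product, mem_Ico, mem_singleton] at ha hb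
    omega
  · rw [Finset.disjoint_left]
    rintro ⟨a, b⟩ ha hb
    simp only [mem_union, mem_filter, mem_product, mem_Ico, mem_singleton] at ha hb
    omega

end Stmt10

theorem stmt10 (k n : ℕ) (hk : 1 ≤ k) (hn : k + 3 ≤ n) :
    Nat.card {σ : Equiv.Perm (Fin n) // avoids132 σ ∧ mmp k 0 1 0 σ = n - 2 - k} =
      2 * k + (n - k).choose 2 := by
  classical
  have hn0 : 0 < n := by omega
  rw [Nat.card_eq_fintype_card, Fintype.card_subtype]
  rw [← Stmt10.card_Pfin hk hn]
  symm
  apply Finset.card_bij (fun p (hp : p ∈ Stmt10.Pfin n k) =>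
    Stmt10.rho n p.1 p.2 (((Stmt10.mem_Pfin hk hn p).1 hp).2.2.1))
  · intro p hp
    obtain ⟨hm, hd, hmd, hcond⟩ := (Stmt10.mem_Pfin hk hn p).1 hp
    rw [Finset.mem_filter]
    refine ⟨Finset.mem_univ _, Stmt10.rho_avoids _, ?_⟩
    rw [Stmt10.rho_mmp hm hd]
    omega
  · rintro ⟨m1, d1⟩ hp1 ⟨m2, d2⟩ hp2 heq
    obtain ⟨hm1, hd1, -, -⟩ := (Stmt10.mem_Pfin hk hn _).1 hp1
    obtain ⟨hm2, hd2, -, -⟩ := (Stmt10.mem_Pfin hk hn _).1 hp2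
    have h1 := congrArg (fun e : Equiv.Perm (Fin n) => (e ⟨0, hn0⟩).val) heq
    have h2 := congrArg (fun e : Equiv.Perm (Fin n) => (e.symm ⟨0, hn0⟩).val) heq
    simp only at h1 h2
    rw [Stmt10.rho_zero_val hd1 _ hn0, Stmt10.rho_zero_val hd2 _ hn0] at h1
    rw [Stmt10.rho_symm_zero_val hm1 _ hn0, Stmt10.rho_symm_zero_val hm2 _ hn0] at h2
    simp only [Prod.mk.injEq]
    exact ⟨h1, h2⟩
  · intro σ hσ
    rw [Finset.mem_filter] at hσ
    obtain ⟨-, hav, hcnt⟩ := hσ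
    obtain ⟨m, d, hmd, hm, hd, heq⟩ := Stmt10.converse hk hn σ hav hcnt
    have hcnt' : mmp k 0 1 0 (Stmt10.rho n m d hmd) = n - 2 - k := heq ▸ hcnt
    rw [Stmt10.rho_mmp hm hd] at hcnt'
    have hmem : (m, d) ∈ Stmt10.Pfin n k :=
      (Stmt10.mem_Pfin hk hn (m, d)).2 ⟨hm, hd, hmd, by omega⟩
    exact ⟨(m, d), hmem, heq.symm⟩
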